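/- Let X be a real Banach space, let {x_n} and {w_n} be bounded sequences in X, and let λ ∈ (0,1). Suppose that x_{n+1} = λ w_n + (1 − λ) x_n for all n ∈ ℕ and that ‖w_{n+1} − w_n‖ ≤ ‖x_{n+1} − x_n‖ for all n ∈ ℕ. Then lim_{n→∞} ‖w_n − x_n‖ = 0. -/

import Mathlib

/-- Goebel–Kirk lemma: if `x` and `w` are bounded sequences in a real Banach space,
`x (n+1) = λ • w n + (1 - λ) • x n` with `λ ∈ (0,1)`, and
`‖w (n+1) - w n‖ ≤ ‖x (n+1) - x n‖` for all `n`, then `‖w n - x n‖ → 0`. -/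
theorem goebel_kirk
    {X : Type*} [NormedAddCommGroup X] [NormedSpace ℝ X] [CompleteSpace X]
    (x w : ℕ → X)
    (hx_bdd : Bornology.IsBounded (Set.range x))
    (hw_bdd : Bornology.IsBounded (Set.range w))
    (l : ℝ) (hl : l ∈ Set.Ioo (0 : ℝ) 1)
    (hrec : ∀ n : ℕ, x (n + 1) = l • w n + (1 - l) • x n)
    (hw : ∀ n : ℕ, ‖w (n + 1) - w n‖ ≤ ‖x (n + 1) - x n‖) :
    Filter.Tendsto (fun n => ‖w n - x n‖) Filter.atTop (nhds 0) := by
  obtain ⟨hl0, hl1⟩ := hl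
  set a : ℕ → ℝ := fun n => ‖w n - x n‖ with ha_def
  have ha_nonneg : ∀ n, 0 ≤ a n := fun n => norm_nonneg _
  have hc0 : (0:ℝ) < 1 - l := by linarith
  -- basic vector identities
  have hΔx : ∀ n, x (n+1) - x n = l • (w n - x n) := by
    intro n; rw [hrec]; module
  have hΔx_norm : ∀ n, ‖x (n+1) - x n‖ = l * a n := by
    intro n
    rw [hΔx, norm_smul, Real.norm_of_nonneg hl0.le]
  have hwx1 : ∀ n, w n - x (n+1) = (1-l) • (w n - x n) := by
    intro n; rw [hrec]; module
  -- a is antitone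
  have ha_succ : ∀ n, a (n+1) ≤ a n := by
    intro n
    have h1 : a (n+1) ≤ ‖w (n+1) - w n‖ + ‖w n - x (n+1)‖ := by
      have := norm_add_le (w (n+1) - w n) (w n - x (n+1))
      simpa [sub_add_sub_cancel] using this
    have h2 : ‖w (n+1) - w n‖ ≤ l * a n := (hw n).trans (hΔx_norm n).le
    have h3 : ‖w n - x (n+1)‖ = (1-l) * a n := by
      rw [hwx1, norm_smul, Real.norm_of_nonneg hc0.le]
    calc a (n+1) ≤ l * a n + (1-l) * a n := by rw [h3] at h1; linarith
    _ = a n := by ring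
  have ha_anti : Antitone a := antitone_nat_of_succ_le ha_succ
  -- telescoping bound on w
  have hwtel : ∀ i k, ‖w (i+k) - w i‖ ≤ l * k * a i := by
    intro i k
    induction k with
    | zero => simp
    | succ k ih =>
      have h1 : ‖w (i+(k+1)) - w i‖ ≤ ‖w (i+k+1) - w (i+k)‖ + ‖w (i+k) - w i‖ := by
        have := norm_add_le (w (i+k+1) - w (i+k)) (w (i+k) - w i)
        simpa [sub_add_sub_cancel, show i+(k+1) = i+k+1 by ring] using this
      have h2 : ‖w (i+k+1) - w (i+k)‖ ≤ l * a (i+k) := (hw (i+k)).trans (hΔx_norm (i+k)).le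
      have h3 : a (i+k) ≤ a i := ha_anti (Nat.le_add_right i k)
      have h4 : l * a (i+k) ≤ l * a i := by nlinarith
      push_cast
      nlinarith
  -- Ishikawa's key inequality
  have key : ∀ n i, (1 + n*l) * a i - ((1-l)⁻¹)^n * (a i - a (i+n)) ≤ ‖w (i+n) - x i‖ := by
    intro n
    induction n with
    | zero => intro i; simp; exact le_rfl
    | succ n ih =>
      intro i
      set μ : ℝ := ((1-l)⁻¹)^n with hμ_def
      have hμ1 : 1 + n*l ≤ μ := by
        have h1 : (1:ℝ) + l ≤ (1-l)⁻¹ := by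
          rw [inv_eq_one_div, le_div_iff₀ hc0]
          nlinarith
        calc (1:ℝ) + n*l ≤ (1+l)^n := by
              have := one_add_mul_le_pow (a := l) (by linarith) n
              linarith
        _ ≤ ((1-l)⁻¹)^n := pow_le_pow_left₀ (by linarith) h1 n
      have hμpos : 0 < μ := pow_pos (inv_pos.mpr hc0) n
      -- vector identity: (1-l) • (w (i+n+1) - x i) = (w (i+n+1) - x (i+1)) - l • (w (i+n+1) - w i)
      have hid : (1-l) • (w (i+(n+1)) - x i)
          = (w (i+(n+1)) - x (i+1)) - l • (w (i+(n+1)) - w i) := by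
        rw [hrec]; module
      have h1 : ‖w (i+(n+1)) - x (i+1)‖ - l * ‖w (i+(n+1)) - w i‖
          ≤ (1-l) * ‖w (i+(n+1)) - x i‖ := by
        have := norm_sub_norm_le (w (i+(n+1)) - x (i+1)) (l • (w (i+(n+1)) - w i))
        rw [← hid, norm_smul, norm_smul, Real.norm_of_nonneg hl0.le,
          Real.norm_of_nonneg hc0.le] at this
        linarith
      have hIH : (1 + n*l) * a (i+1) - μ * (a (i+1) - a (i+1+n)) ≤ ‖w (i+1+n) - x (i+1)‖ :=
        ih (i+1)
      rw [show i+1+n = i+(n+1) by ring] at hIH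
      have hW : ‖w (i+(n+1)) - w i‖ ≤ l * (n+1) * a i := by
        have := hwtel i (n+1); push_cast at this ⊢; linarith
      -- combine
      have hAC : a (i+1) ≤ a i := ha_succ i
      have hBC : a (i+(n+1)) ≤ a (i+1) := ha_anti (by omega)
      have hcomb : (1 + n*l) * a (i+1) - μ * (a (i+1) - a (i+(n+1))) - l * (l * (n+1) * a i)
          ≤ (1-l) * ‖w (i+(n+1)) - x i‖ := by
        have h2 : l * ‖w (i+(n+1)) - w i‖ ≤ l * (l * (n+1) * a i) := by nlinarith
        linarith
      -- target multiplied by (1-l)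
      have hpow : ((1-l)⁻¹)^(n+1) = μ * (1-l)⁻¹ := by rw [pow_succ]
      rw [← mul_le_mul_iff_of_pos_left hc0]
      calc (1-l) * ((1 + (n+1:ℕ)*l) * a i - ((1-l)⁻¹)^(n+1) * (a i - a (i+(n+1))))
          = (1 + n*l - (n+1)*l^2) * a i - μ * (a i - a (i+(n+1))) := by
            rw [hpow]; push_cast; field_simp; ring
        _ ≤ (1 + n*l) * a (i+1) - μ * (a (i+1) - a (i+(n+1))) - l * (l * (n+1) * a i) := by
            nlinarith [mul_nonneg (sub_nonneg.mpr hμ1) (sub_nonneg.mpr hAC)]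
        _ ≤ (1-l) * ‖w (i+(n+1)) - x i‖ := hcomb
  -- boundedness
  obtain ⟨Cx, hCx⟩ := isBounded_iff_forall_norm_le.mp hx_bdd
  obtain ⟨Cw, hCw⟩ := isBounded_iff_forall_norm_le.mp hw_bdd
  set M : ℝ := Cw + Cx with hM_def
  have hM : ∀ i n, ‖w (i+n) - x i‖ ≤ M := by
    intro i n
    calc ‖w (i+n) - x i‖ ≤ ‖w (i+n)‖ + ‖x i‖ := norm_sub_le _ _
    _ ≤ Cw + Cx := add_le_add (hCw _ ⟨i+n, rfl⟩) (hCx _ ⟨i, rfl⟩)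
  have hM0 : 0 ≤ M := le_trans (norm_nonneg _) (hM 0 0)
  -- a converges to its infimum
  have hbdd : BddBelow (Set.range a) := ⟨0, fun y ⟨n, hn⟩ => hn ▸ ha_nonneg n⟩
  set r : ℝ := ⨅ n, a n with hr_def
  have hconv : Filter.Tendsto a Filter.atTop (nhds r) :=
    tendsto_atTop_ciInf ha_anti hbdd
  have hr_le : ∀ n, r ≤ a n := fun n => ciInf_le hbdd n
  have hr0 : 0 ≤ r := le_ciInf ha_nonneg
  -- r = 0
  have hr : r = 0 := by
    by_contra hne
    have hrpos : 0 < r := lt_of_le_of_ne hr0 (Ne.symm hne)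
    obtain ⟨n, hn⟩ := exists_nat_gt ((M + 1) / (l * r))
    have hn' : M + 1 < n * l * r := by
      rw [div_lt_iff₀ (by positivity)] at hn
      nlinarith
    set μ : ℝ := ((1-l)⁻¹)^n with hμ_def
    have hμpos : 0 < μ := pow_pos (inv_pos.mpr hc0) n
    have hconv' : Filter.Tendsto (fun i => a (i+n)) Filter.atTop (nhds r) :=
      hconv.comp (Filter.tendsto_add_atTop_nat n)
    have hdiff : Filter.Tendsto (fun i => a i - a (i+n)) Filter.atTop (nhds 0) := by
      simpa using hconv.sub hconv'
    have hev : ∀ᶠ i in Filter.atTop, a i - a (i+n) < μ⁻¹ :=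
      hdiff.eventually_lt_const (by positivity)
    obtain ⟨i, hi⟩ := hev.exists
    have hkey := key n i
    have hMi := hM i n
    have h1 : μ * (a i - a (i+n)) < 1 := by
      have := mul_lt_mul_of_pos_left hi hμpos
      rw [mul_inv_cancel₀ (ne_of_gt hμpos)] at this
      exact this
    have h2 : (1 + n*l) * r ≤ (1 + n*l) * a i := by
      have : (0:ℝ) < 1 + n*l := by positivity
      nlinarith [hr_le i]
    nlinarith
  simpa [ha_def, hr] using hconv
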